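/- Let P and Q be positive definite n×n matrices and let λ ∈ (0,1). Then the Minkowski sum E(p, P) + E(q, Q) is contained in the ellipsoid E(p+q, (1/λ) P + (1/(1−λ)) Q). -/

import Mathlib

open Matrix

private lemma posDef_smul' {n : ℕ} {M : Matrix (Fin n) (Fin n) ℝ} (hM : M.PosDef) {c : ℝ}
    (hc : 0 < c) : (c • M).PosDef := by
  refine Matrix.PosDef.of_dotProduct_mulVec_pos ?_ (fun x hx => ?_)
  · unfold Matrix.IsHermitian
    rw [conjTranspose_smul, hM.1.eq]
    simp
  · rw [smul_mulVec, dotProduct_smul, smul_eq_mul]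
    exact mul_pos hc (hM.dotProduct_mulVec_pos hx)

private lemma dp_symm {n : ℕ} {N : Matrix (Fin n) (Fin n) ℝ} (hN : Nᵀ = N) (x y : Fin n → ℝ) :
    x ⬝ᵥ N *ᵥ y = y ⬝ᵥ N *ᵥ x := by
  rw [dotProduct_mulVec, dotProduct_comm]
  conv_lhs => rw [← hN, vecMul_transpose]

private lemma sym_of_posDef {n : ℕ} {N : Matrix (Fin n) (Fin n) ℝ} (hN : N.PosDef) : Nᵀ = N := by
  have := hN.1.eq
  rwa [conjTranspose_eq_transpose_of_trivial] at this

private lemma key_ineq {n : ℕ} (A B : Matrix (Fin n) (Fin n) ℝ) (hA : A.PosDef) (hB : B.PosDef)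
    (u v : Fin n → ℝ) :
    (u + v) ⬝ᵥ (A + B)⁻¹ *ᵥ (u + v) ≤ u ⬝ᵥ A⁻¹ *ᵥ u + v ⬝ᵥ B⁻¹ *ᵥ v := by
  have hC : (A + B).PosDef := hA.add hB
  have hAd : IsUnit A.det := isUnit_iff_ne_zero.2 hA.det_pos.ne'
  have hBd : IsUnit B.det := isUnit_iff_ne_zero.2 hB.det_pos.ne'
  have hCd : IsUnit (A + B).det := isUnit_iff_ne_zero.2 hC.det_pos.ne'
  set w := u + v with hw
  set M := (A + B)⁻¹ with hM
  set H := A⁻¹ + B⁻¹ with hH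
  have hCM : (A + B) * M = 1 := mul_nonsing_inv _ hCd
  have hMC : M * (A + B) = 1 := nonsing_inv_mul _ hCd
  have haA : A⁻¹ * A = 1 := nonsing_inv_mul _ hAd
  have hbB : B⁻¹ * B = 1 := nonsing_inv_mul _ hBd
  -- symmetry facts
  have hMs : Mᵀ = M := sym_of_posDef hC.inv
  have hAs : Aᵀ = A := sym_of_posDef hA
  have has : (A⁻¹)ᵀ = A⁻¹ := sym_of_posDef hA.inv
  have hbs : (B⁻¹)ᵀ = B⁻¹ := sym_of_posDef hB.inv
  have hHs : Hᵀ = H := by rw [hH, transpose_add, has, hbs]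
  -- matrix identities
  have hHAM : H * (A * M) = B⁻¹ := by
    have e1 : H * (A * M) = A⁻¹ * A * M + (B⁻¹ * ((A + B) * M) - B⁻¹ * B * M) := by
      rw [hH]; noncomm_ring
    rw [e1, haA, hCM, hbB]
    simp
  have hMAB : (M * A) * B⁻¹ = B⁻¹ - M := by
    have e1 : (M * A) * B⁻¹ = (M * (A + B)) * B⁻¹ - M * (B * B⁻¹) := by noncomm_ring
    rw [e1, hMC, mul_nonsing_inv _ hBd, one_mul, mul_one]
  set s := (A * M) *ᵥ w with hs
  set r := u - s with hr
  have hHpsd : H.PosSemidef := (hA.inv.add hB.inv).posSemidef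
  have hrpos : 0 ≤ r ⬝ᵥ H *ᵥ r := by
    have := hHpsd.dotProduct_mulVec_nonneg r
    simpa using this
  -- compute H *ᵥ s
  have hHs2 : H *ᵥ s = B⁻¹ *ᵥ w := by
    rw [hs, mulVec_mulVec, hHAM]
  -- s ⬝ᵥ B⁻¹ *ᵥ w
  have hsB : s ⬝ᵥ B⁻¹ *ᵥ w = w ⬝ᵥ B⁻¹ *ᵥ w - w ⬝ᵥ M *ᵥ w := by
    rw [hs, dotProduct_mulVec _ B⁻¹, vecMul_mulVec, transpose_mul, hMs, hAs,
      ← dotProduct_mulVec, hMAB, Matrix.sub_mulVec, dotProduct_sub]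
  -- expand r ⬝ᵥ H *ᵥ r
  have hexp : r ⬝ᵥ H *ᵥ r
      = u ⬝ᵥ H *ᵥ u - 2 * (u ⬝ᵥ B⁻¹ *ᵥ w) + (w ⬝ᵥ B⁻¹ *ᵥ w - w ⬝ᵥ M *ᵥ w) := by
    have h1 : u ⬝ᵥ H *ᵥ s = u ⬝ᵥ B⁻¹ *ᵥ w := by rw [hHs2]
    have h2 : s ⬝ᵥ H *ᵥ u = u ⬝ᵥ B⁻¹ *ᵥ w := by rw [dp_symm hHs, h1]
    have h3 : s ⬝ᵥ H *ᵥ s = w ⬝ᵥ B⁻¹ *ᵥ w - w ⬝ᵥ M *ᵥ w := by rw [hHs2, hsB]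
    rw [hr, sub_dotProduct, mulVec_sub, dotProduct_sub, dotProduct_sub, h1, h2, h3]
    ring
  -- expand target quadratic forms
  have hvB : v ⬝ᵥ B⁻¹ *ᵥ v
      = w ⬝ᵥ B⁻¹ *ᵥ w - 2 * (u ⬝ᵥ B⁻¹ *ᵥ w) + u ⬝ᵥ B⁻¹ *ᵥ u := by
    have hv : v = w - u := by rw [hw]; abel
    have h4 : w ⬝ᵥ B⁻¹ *ᵥ u = u ⬝ᵥ B⁻¹ *ᵥ w := dp_symm hbs w u
    rw [hv, sub_dotProduct, mulVec_sub, dotProduct_sub, dotProduct_sub, h4]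
    ring
  have hHu : u ⬝ᵥ H *ᵥ u = u ⬝ᵥ A⁻¹ *ᵥ u + u ⬝ᵥ B⁻¹ *ᵥ u := by
    rw [hH, add_mulVec, dotProduct_add]
  -- conclude
  have : u ⬝ᵥ A⁻¹ *ᵥ u + v ⬝ᵥ B⁻¹ *ᵥ v = w ⬝ᵥ M *ᵥ w + r ⬝ᵥ H *ᵥ r := by
    rw [hexp, hHu, hvB]; ring
  linarith

theorem minkowski_sum_ellipsoids_subset {n : ℕ}
    (P Q : Matrix (Fin n) (Fin n) ℝ) (hP : P.PosDef) (hQ : Q.PosDef)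
    (p q : Fin n → ℝ) (lam : ℝ) (hlam : lam ∈ Set.Ioo (0 : ℝ) 1) :
    {z : Fin n → ℝ | ∃ x y : Fin n → ℝ,
        (x - p) ⬝ᵥ P⁻¹.mulVec (x - p) ≤ 1 ∧
        (y - q) ⬝ᵥ Q⁻¹.mulVec (y - q) ≤ 1 ∧ z = x + y} ⊆
      {z : Fin n → ℝ |
        (z - (p + q)) ⬝ᵥ ((1 / lam) • P + (1 / (1 - lam)) • Q)⁻¹.mulVec (z - (p + q)) ≤ 1} := by
  obtain ⟨hl0, hl1⟩ := hlam
  have hl1' : 0 < 1 - lam := by linarith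
  rintro z ⟨x, y, hx, hy, rfl⟩
  set A := (1 / lam) • P with hA
  set B := (1 / (1 - lam)) • Q with hB
  have hAp : A.PosDef := posDef_smul' hP (by positivity)
  have hBp : B.PosDef := posDef_smul' hQ (by positivity)
  set u := x - p with hu
  set v := y - q with hv
  have hw : x + y - (p + q) = u + v := by rw [hu, hv]; abel
  have hkey := key_ineq A B hAp hBp u v
  rw [Set.mem_setOf_eq, hw]
  -- compute A⁻¹, B⁻¹
  have hPd : IsUnit P.det := isUnit_iff_ne_zero.2 hP.det_pos.ne'
  have hQd : IsUnit Q.det := isUnit_iff_ne_zero.2 hQ.det_pos.ne'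
  haveI : Invertible (1 / lam) := invertibleOfNonzero (by positivity)
  haveI : Invertible (1 / (1 - lam)) := invertibleOfNonzero (by positivity)
  have hAinv : A⁻¹ = lam • P⁻¹ := by
    rw [hA, Matrix.inv_smul (A := P) (1/lam) hPd, invOf_eq_inv, one_div, inv_inv]
  have hBinv : B⁻¹ = (1 - lam) • Q⁻¹ := by
    rw [hB, Matrix.inv_smul (A := Q) (1/(1-lam)) hQd, invOf_eq_inv, one_div, inv_inv]
  have h1 : u ⬝ᵥ A⁻¹ *ᵥ u ≤ lam := by
    rw [hAinv, smul_mulVec, dotProduct_smul, smul_eq_mul]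
    calc lam * (u ⬝ᵥ P⁻¹ *ᵥ u) ≤ lam * 1 := by
          exact mul_le_mul_of_nonneg_left hx hl0.le
      _ = lam := mul_one _
  have h2 : v ⬝ᵥ B⁻¹ *ᵥ v ≤ 1 - lam := by
    rw [hBinv, smul_mulVec, dotProduct_smul, smul_eq_mul]
    calc (1 - lam) * (v ⬝ᵥ Q⁻¹ *ᵥ v) ≤ (1 - lam) * 1 := by
          exact mul_le_mul_of_nonneg_left hy hl1'.le
      _ = 1 - lam := mul_one _
  calc (u + v) ⬝ᵥ (A + B)⁻¹ *ᵥ (u + v) ≤ u ⬝ᵥ A⁻¹ *ᵥ u + v ⬝ᵥ B⁻¹ *ᵥ v := hkey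
    _ ≤ lam + (1 - lam) := add_le_add h1 h2
    _ = 1 := by ring
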